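/- For odd n ≥ 1, the directed cycle C_n admits a 2-semilattice polymorphism: a binary polymorphism · satisfying x·x = x, x·y = y·x, and x·(x·y) = x·y for all x, y. Concretely, with m = ⌊n/2⌋, the operation i·j defined to equal i if the least nonnegative residue of j − i modulo n is at most m, and j otherwise, is such a polymorphism. -/
import Mathlib


/-- For odd `n ≥ 1`, the directed cycle `C_n` admits a 2-semilattice polymorphism,
given concretely using the least nonnegative residue. -/
theorem stmt_6 (n : ℕ) (hn : 1 ≤ n) (hodd : Odd n)
    (f : ZMod n → ZMod n → ZMod n)
    (hdef : ∀ i j : ZMod n, f i j = if (j - i).val ≤ n / 2 then i else j) :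
    (∀ a b c d : ZMod n, b = a + 1 → d = c + 1 → f b d = f a c + 1) ∧
    (∀ x : ZMod n, f x x = x) ∧
    (∀ x y : ZMod n, f x y = f y x) ∧
    (∀ x y : ZMod n, f x (f x y) = f x y) := by
  haveI : NeZero n := ⟨by omega⟩
  refine ⟨?_, ?_, ?_, ?_⟩
  · intro a b c d hb hd
    rw [hdef, hdef]
    have h : d - b = c - a := by rw [hb, hd]; ring
    rw [h]
    split <;> [rw [hb]; rw [hd]]
  · intro x
    rw [hdef]
    simp [ZMod.val_zero]
  · intro x y
    rw [hdef, hdef]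
    by_cases hxy : x = y
    · simp [hxy]
    · have hne : y - x ≠ 0 := sub_ne_zero.mpr (Ne.symm hxy)
      have h1 : (x - y) = -(y - x) := by ring
      have h2 : (x - y).val = n - (y - x).val := by
        rw [h1, ZMod.neg_val]
        simp [hne]
      have hv1 : 1 ≤ (y - x).val := by
        rcases Nat.eq_zero_or_pos (y - x).val with h | h
        · exact absurd ((ZMod.val_eq_zero _).mp h) hne
        · exact h
      have hv2 : (y - x).val < n := ZMod.val_lt _
      obtain ⟨k, hk⟩ := hodd
      by_cases h : (y - x).val ≤ n / 2
      · rw [if_pos h, if_neg (by omega)]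
      · rw [if_neg h, if_pos (by omega)]
  · intro x y
    by_cases h : (y - x).val ≤ n / 2
    · have hxy : f x y = x := by rw [hdef]; simp [h]
      rw [hxy, hdef]
      simp [ZMod.val_zero, hxy]
    · have hxy : f x y = y := by rw [hdef]; simp [h]
      rw [hxy, hdef, if_neg h]
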